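/- For every integer d ≥ 2, a finite simple graph G is 2^d-colorable if and only if G is locatable in ℤ^d. -/

import Mathlib

open SimpleGraph

/-- Cast an integer grid point to a real point. -/
def castPt {d : ℕ} (p : Fin d → ℤ) : Fin d → ℝ := fun i => (p i : ℝ)

/-- The grid points lying on the closed segment in `ℝ^d` joining `a` and `b`. -/
def segGridPts {d : ℕ} (a b : Fin d → ℤ) : Set (Fin d → ℤ) :=
  {p | castPt p ∈ segment ℝ (castPt a) (castPt b)}

/-- `φ` is a grid drawing of `G` in `ℤ^d`: it is injective and no vertex image other than the
endpoints lies on the closed segment representing an edge. -/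
def IsGridDrawing {V : Type*} {d : ℕ} (G : SimpleGraph V) (φ : V → Fin d → ℤ) : Prop :=
  Function.Injective φ ∧
    ∀ u v w : V, G.Adj u v →
      castPt (φ w) ∈ segment ℝ (castPt (φ u)) (castPt (φ v)) → w = u ∨ w = v

/-- `G` is `q`-locatable in `ℤ^d`: it has a grid drawing in which every edge segment contains
at most `q` grid points. -/
def IsQLocatable {V : Type*} (G : SimpleGraph V) (d q : ℕ) : Prop :=
  ∃ φ : V → Fin d → ℤ, IsGridDrawing G φ ∧
    ∀ u v : V, G.Adj u v → (segGridPts (φ u) (φ v)).ncard ≤ q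

/-- A primitive grid drawing: every edge segment contains exactly its two endpoints
as grid points. -/
def IsPrimitiveDrawing {V : Type*} {d : ℕ} (G : SimpleGraph V) (φ : V → Fin d → ℤ) : Prop :=
  IsGridDrawing G φ ∧ ∀ u v : V, G.Adj u v → segGridPts (φ u) (φ v) = {φ u, φ v}

/-- `G` is locatable in `ℤ^d`: it has a primitive grid drawing in `ℤ^d`. -/
def IsLocatable {V : Type*} (G : SimpleGraph V) (d : ℕ) : Prop :=
  ∃ φ : V → Fin d → ℤ, IsPrimitiveDrawing G φ

/-- The rank of a grid point in `ℤ^d`: the tuple of its first `d - 1` coordinates. -/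
def rank {d : ℕ} (p : Fin d → ℤ) : Fin (d - 1) → ℤ :=
  fun i => p (Fin.castLE (Nat.sub_le d 1) i)

/-- `G` is embeddable on `l` columns: it has a grid drawing in `ℤ²` in which the first
coordinates of the vertex images take at most `l` distinct values. -/
def EmbeddableOnCols {V : Type*} (G : SimpleGraph V) (l : ℕ) : Prop :=
  ∃ φ : V → Fin 2 → ℤ, IsGridDrawing G φ ∧ (Set.range fun v => φ v 0).ncard ≤ l

/-- `G` can be located on `l` columns in `ℤ^d`: it has a primitive grid drawing in `ℤ^d`
using at most `l` columns. -/
def LocatableOnCols {V : Type*} (G : SimpleGraph V) (d l : ℕ) : Prop :=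
  ∃ φ : V → Fin d → ℤ, IsPrimitiveDrawing G φ ∧ (Set.range fun v => rank (φ v)).ncard ≤ l

/-- A linear forest: an acyclic graph with maximum degree at most two
(i.e. a disjoint union of paths). -/
def IsLinearForest {W : Type*} (H : SimpleGraph W) : Prop :=
  H.IsAcyclic ∧ ∀ v : W, {w | H.Adj v w}.ncard ≤ 2


lemma odd_dvd_four_isUnit {m : ℤ} (h2 : ¬ (2:ℤ) ∣ m) (h4 : m ∣ 4) : IsUnit m := by
  rw [Int.isUnit_iff_natAbs_eq]
  have hdd : m.natAbs ∣ 4 := Int.natAbs_dvd_natAbs.mpr h4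
  have ho : ¬ (2 ∣ m.natAbs) := fun h => h2 (Int.dvd_natAbs.mp (Int.natCast_dvd_natCast.mpr h))
  have hcop : Nat.Coprime m.natAbs 2 := ((Nat.Prime.coprime_iff_not_dvd Nat.prime_two).mpr ho).symm
  have h4' : Nat.Coprime m.natAbs 4 := by
    have := hcop.pow_right 2
    norm_num at this
    exact this
  exact h4'.eq_one_of_dvd hdd

lemma common_dvd_unit {d : ℕ} (hd : 2 ≤ d) (ε : Fin d → ℤ) (C : ℤ)
    (hε : ∀ i, ε i = 0 ∨ ε i = 1 ∨ ε i = -1) (hne : ∃ j, ε j ≠ 0)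
    (hC2 : (2:ℤ) ∣ C) (hC3 : (3:ℤ) ∣ C)
    (m : ℤ) (hm : ∀ i : Fin d, m ∣ ε i + C * 3 ^ (i : ℕ)) : IsUnit m := by
  by_contra hunit
  obtain ⟨j, hj⟩ := hne
  have hm2 : ¬ (2:ℤ) ∣ m := by
    intro h2
    have h2' : (2:ℤ) ∣ ε j + C * 3 ^ (j:ℕ) := h2.trans (hm j)
    have h2e : (2:ℤ) ∣ ε j := by
      have := dvd_sub h2' (hC2.mul_right (3 ^ (j:ℕ)))
      simpa using this
    rcases hε j with h | h | h <;> rw [h] at h2e <;> [exact hj h; norm_num at h2e; norm_num at h2e]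
  have key : ∀ i : ℕ, (h : i + 1 < d) → m ∣ 3 * ε ⟨i, by omega⟩ - ε ⟨i+1, h⟩ := by
    intro i h
    have h1 := (hm ⟨i, by omega⟩).mul_left 3
    have h2 := hm ⟨i+1, h⟩
    have e : 3 * (ε ⟨i, by omega⟩ + C * 3 ^ ((⟨i, by omega⟩ : Fin d) : ℕ))
        - (ε ⟨i+1, h⟩ + C * 3 ^ ((⟨i+1, h⟩ : Fin d) : ℕ))
        = 3 * ε ⟨i, by omega⟩ - ε ⟨i+1, h⟩ := by
      simp only [Fin.val_mk]
      ring
    rw [← e]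
    exact dvd_sub h1 h2
  have εz : ∀ i : ℕ, (h : i + 1 < d) → ε ⟨i+1, h⟩ = 0 := by
    intro i h
    have hk := key i h
    rcases hε ⟨i+1, h⟩ with h0 | h0 | h0
    · exact h0
    · exact absurd (odd_dvd_four_isUnit hm2 (by
        rcases hε ⟨i, by omega⟩ with h1 | h1 | h1 <;> rw [h0, h1] at hk <;>
          exact hk.trans (by norm_num))) hunit
    · exact absurd (odd_dvd_four_isUnit hm2 (by
        rcases hε ⟨i, by omega⟩ with h1 | h1 | h1 <;> rw [h0, h1] at hk <;>
          exact hk.trans (by norm_num))) hunit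
  have hjlt := j.isLt
  have ε0ne : ε ⟨0, by omega⟩ ≠ 0 := by
    intro h0
    apply hj
    rcases Nat.eq_zero_or_pos j.val with hjv | hjv
    · have hjj : j = ⟨0, by omega⟩ := Fin.ext hjv
      rw [hjj]; exact h0
    · obtain ⟨i, hi⟩ : ∃ i, (j:ℕ) = i + 1 := ⟨(j:ℕ) - 1, by omega⟩
      have hjj : j = ⟨i+1, by omega⟩ := Fin.ext hi
      rw [hjj]; exact εz i (by omega)
  have hk := key 0 (by omega)
  rw [εz 0 (by omega)] at hk
  have hm3 : m ∣ 3 := by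
    rcases hε ⟨0, by omega⟩ with h | h | h
    · exact absurd h ε0ne
    · rw [h] at hk; simpa using hk
    · rw [h] at hk
      have : m ∣ -3 := by simpa using hk
      exact dvd_neg.mp this
  have h3m : (3:ℤ) ∣ m := by
    have hna : m.natAbs ∣ 3 := Int.natAbs_dvd_natAbs.mpr hm3
    have h1 : m.natAbs ≠ 1 := fun h => hunit (Int.isUnit_iff_natAbs_eq.mpr h)
    have h3 : m.natAbs = 3 := by
      rcases (Nat.dvd_prime Nat.prime_three).mp hna with h | h
      · exact absurd h h1
      · exact h
    rcases Int.natAbs_eq_iff.mp h3 with h | h <;> rw [h] <;> norm_num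
  have hd0 := h3m.trans (hm ⟨0, by omega⟩)
  have h3ε : (3:ℤ) ∣ ε ⟨0, by omega⟩ := by
    have := dvd_sub hd0 (hC3.mul_right (3 ^ ((⟨0, by omega⟩ : Fin d) : ℕ)))
    simpa using this
  rcases hε ⟨0, by omega⟩ with h | h | h
  · exact ε0ne h
  · rw [h] at h3ε; norm_num at h3ε
  · rw [h] at h3ε; norm_num at h3ε


lemma segGridPts_aux {d : ℕ} (a b : Fin d → ℤ)
    (H : ∀ m : ℤ, (∀ i, m ∣ b i - a i) → IsUnit m) (p : Fin d → ℤ)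
    (hp : (fun i => (p i : ℝ)) ∈ segment ℝ (fun i => (a i : ℝ)) (fun i => (b i : ℝ))) :
    p = a ∨ p = b := by
  obtain ⟨j, hj⟩ : ∃ j, b j - a j ≠ 0 := by
    by_contra h
    push_neg at h
    have := H 0 (fun i => by rw [h i])
    simp [Int.isUnit_iff] at this
  obtain ⟨s, t, hs, ht, hst, heq⟩ := hp
  have hcoord : ∀ i, (p i : ℝ) - a i = t * ((b i : ℝ) - a i) := by
    intro i
    have h1 := congrFun heq i
    simp only [Pi.add_apply, Pi.smul_apply, smul_eq_mul] at h1
    linear_combination (↑(a i) : ℝ) * hst - h1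
  have cross : ∀ i, (b j - a j) * (p i - a i) = (p j - a j) * (b i - a i) := by
    intro i
    have : (((b j - a j) * (p i - a i) : ℤ) : ℝ) = (((p j - a j) * (b i - a i) : ℤ) : ℝ) := by
      push_cast
      linear_combination ((b j : ℝ) - a j) * hcoord i - ((b i : ℝ) - a i) * hcoord j
    exact_mod_cast this
  set g : ℕ := Int.gcd (p j - a j) (b j - a j) with hg
  have hgpos : 0 < g := by
    rw [hg, Int.gcd_pos_iff]
    exact Or.inr hj
  have hgne : (g : ℤ) ≠ 0 := by exact_mod_cast hgpos.ne'
  obtain ⟨N', hN'⟩ : (g : ℤ) ∣ (p j - a j) := Int.gcd_dvd_left _ _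
  obtain ⟨D', hD'⟩ : (g : ℤ) ∣ (b j - a j) := Int.gcd_dvd_right _ _
  have hcop : IsCoprime N' D' := by
    rw [Int.isCoprime_iff_gcd_eq_one]
    have := Int.gcd_div_gcd_div_gcd (i := p j - a j) (j := b j - a j) hgpos
    rw [← hg] at this
    rwa [hN', hD', Int.mul_ediv_cancel_left _ hgne, Int.mul_ediv_cancel_left _ hgne] at this
  have hD'dvd : ∀ i, D' ∣ (b i - a i) := by
    intro i
    have h1 : (g : ℤ) * D' ∣ (g : ℤ) * (N' * (b i - a i)) :=
      ⟨p i - a i, by rw [← hD', cross i, hN']; ring⟩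
    have h2 : D' ∣ N' * (b i - a i) := (mul_dvd_mul_iff_left hgne).mp h1
    exact hcop.symm.dvd_of_dvd_mul_left h2
  have hunit : IsUnit D' := H D' (fun i => hD'dvd i)
  have hdvdN : (b j - a j) ∣ (p j - a j) := by
    rcases Int.isUnit_iff.mp hunit with h | h
    · rw [hD', h, mul_one, hN']; exact Dvd.intro _ rfl
    · rw [hD', h, mul_neg_one, hN']; exact (neg_dvd).mpr (Dvd.intro _ rfl)
  obtain ⟨T, hT⟩ := hdvdN
  have hδR : ((b j : ℝ) - a j) ≠ 0 := by
    intro h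
    apply hj
    have : ((b j - a j : ℤ) : ℝ) = 0 := by push_cast; linarith
    exact_mod_cast this
  have hTR : (p j : ℝ) - a j = ((b j : ℝ) - a j) * T := by
    have : ((p j - a j : ℤ) : ℝ) = (((b j - a j) * T : ℤ) : ℝ) := by rw [hT]
    push_cast at this
    linarith [this]
  have htT : t = (T : ℝ) := by
    have h1 := hcoord j
    rw [hTR] at h1
    exact mul_right_cancel₀ hδR (by linarith [h1])
  have ht1 : t ≤ 1 := by linarith
  have hT0 : (0:ℤ) ≤ T := by rw [htT] at ht; exact_mod_cast ht
  have hT1 : T ≤ 1 := by rw [htT] at ht1; exact_mod_cast ht1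
  interval_cases T
  · left
    funext i
    have h2 := hcoord i
    rw [htT] at h2
    push_cast at h2
    have : (p i : ℝ) = a i := by linarith
    exact_mod_cast this
  · right
    funext i
    have h2 := hcoord i
    rw [htT] at h2
    push_cast at h2
    have : (p i : ℝ) = b i := by linarith
    exact_mod_cast this

theorem colorable_iff_locatable {V : Type*} [Fintype V] (G : SimpleGraph V)
    (d : ℕ) (hd : 2 ≤ d) :
    G.Colorable (2 ^ d) ↔ IsLocatable G d := by
  constructor
  · rintro ⟨Cc⟩
    let β : V → Fin d → ℕ := fun v i => ((finFunctionFinEquiv.symm (Cc v) : Fin d → Fin 2) i : ℕ)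
    let k : V → ℕ := fun v => (Fintype.equivFin V v : ℕ)
    let φ : V → Fin d → ℤ := fun v i => (β v i : ℤ) + 4 ^ (k v + 1) * 3 ^ (i : ℕ)
    have βle : ∀ v i, β v i ≤ 1 := fun v i =>
      Nat.lt_succ_iff.mp ((finFunctionFinEquiv.symm (Cc v) : Fin d → Fin 2) i).isLt
    have hkinj : Function.Injective k := fun u v h =>
      (Fintype.equivFin V).injective (Fin.val_injective h)
    have hφinj : Function.Injective φ := by
      intro u v h
      apply hkinj
      by_contra hk
      have h0 := congrFun h ⟨0, by omega⟩
      simp only [φ, Fin.val_mk, pow_zero, mul_one] at h0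
      have hb1 : (β u ⟨0, by omega⟩ : ℤ) ≤ 1 := by exact_mod_cast βle u _
      have hb2 : (β v ⟨0, by omega⟩ : ℤ) ≤ 1 := by exact_mod_cast βle v _
      have hb3 : (0:ℤ) ≤ (β u ⟨0, by omega⟩ : ℤ) := Int.natCast_nonneg _
      have hb4 : (0:ℤ) ≤ (β v ⟨0, by omega⟩ : ℤ) := Int.natCast_nonneg _
      rcases Nat.lt_or_ge (k u) (k v) with hlt | hge
      · have hp1 : (4:ℤ) ^ (k u + 1) * 4 ≤ 4 ^ (k v + 1) := by
          calc (4:ℤ) ^ (k u + 1) * 4 = 4 ^ (k u + 2) := by ring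
          _ ≤ 4 ^ (k v + 1) := pow_le_pow_right₀ (by norm_num) (by omega)
        have hp2 : (1:ℤ) ≤ 4 ^ (k u + 1) := one_le_pow₀ (by norm_num)
        linarith
      · have hlt : k v < k u := by omega
        have hp1 : (4:ℤ) ^ (k v + 1) * 4 ≤ 4 ^ (k u + 1) := by
          calc (4:ℤ) ^ (k v + 1) * 4 = 4 ^ (k v + 2) := by ring
          _ ≤ 4 ^ (k u + 1) := pow_le_pow_right₀ (by norm_num) (by omega)
        have hp2 : (1:ℤ) ≤ 4 ^ (k v + 1) := one_le_pow₀ (by norm_num)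
        linarith
    have hH : ∀ u v : V, G.Adj u v → ∀ m : ℤ, (∀ i, m ∣ φ v i - φ u i) → IsUnit m := by
      intro u v hadj m hm
      refine common_dvd_unit hd (fun i => (β v i : ℤ) - β u i)
        ((4:ℤ) ^ (k v + 1) - 4 ^ (k u + 1)) (fun i => ?_) ?_ ?_ ?_ m (fun i => ?_)
      · show (β v i : ℤ) - β u i = 0 ∨ (β v i : ℤ) - β u i = 1 ∨ (β v i : ℤ) - β u i = -1
        have h1 := βle u i; have h2 := βle v i; omega
      · have hcc : Cc u ≠ Cc v := Cc.valid hadj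
        have : finFunctionFinEquiv.symm (Cc u) ≠ finFunctionFinEquiv.symm (Cc v) :=
          fun h => hcc (finFunctionFinEquiv.symm.injective h)
        obtain ⟨i, hi⟩ := Function.ne_iff.mp this
        refine ⟨i, fun h => hi (Fin.val_injective ?_)⟩
        have h' : (β v i : ℤ) - β u i = 0 := h
        show β u i = β v i
        omega
      · exact dvd_sub (dvd_pow (by norm_num) (Nat.succ_ne_zero _))
          (dvd_pow (by norm_num) (Nat.succ_ne_zero _))
      · have h1 := sub_dvd_pow_sub_pow (4:ℤ) 1 (k v + 1)
        have h2 := sub_dvd_pow_sub_pow (4:ℤ) 1 (k u + 1)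
        norm_num at h1 h2
        have e : (4:ℤ) ^ (k v + 1) - 4 ^ (k u + 1)
            = (4 ^ (k v + 1) - 1) - (4 ^ (k u + 1) - 1) := by ring
        rw [e]
        exact dvd_sub h1 h2
      · have := hm i
        have e : φ v i - φ u i
            = ((β v i : ℤ) - β u i) + ((4:ℤ) ^ (k v + 1) - 4 ^ (k u + 1)) * 3 ^ (i : ℕ) := by
          simp only [φ]; ring
        rwa [e] at this
    have hprim : ∀ u v : V, G.Adj u v → segGridPts (φ u) (φ v) = {φ u, φ v} := by
      intro u v hadj
      ext p
      constructor
      · intro hp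
        have := segGridPts_aux (φ u) (φ v) (hH u v hadj) p hp
        rcases this with h | h
        · exact Or.inl h
        · exact Or.inr h
      · rintro (rfl | rfl)
        · exact left_mem_segment ℝ _ _
        · exact right_mem_segment ℝ _ _
    refine ⟨φ, ⟨hφinj, ?_⟩, hprim⟩
    intro u v w hadj hw
    have : φ w ∈ segGridPts (φ u) (φ v) := hw
    rw [hprim u v hadj] at this
    rcases this with h | h
    · exact Or.inl (hφinj h)
    · exact Or.inr (hφinj h)
  · rintro ⟨φ, ⟨hinj, hseg⟩, hprim⟩
    refine ⟨Coloring.mk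
      (fun v => finFunctionFinEquiv (fun i => if (2:ℤ) ∣ φ v i then 0 else 1)) ?_⟩
    intro u v hadj hEq
    have hfun := finFunctionFinEquiv.injective hEq
    have hpar : ∀ i, (2:ℤ) ∣ φ v i - φ u i := by
      intro i
      have hi := congrFun hfun i
      by_cases h1 : (2:ℤ) ∣ φ u i <;> by_cases h2 : (2:ℤ) ∣ φ v i
      · exact dvd_sub h2 h1
      · simp [h1, h2] at hi
      · simp [h1, h2] at hi
      · omega
    have hφne : φ u ≠ φ v := fun h => hadj.ne (hinj h)
    choose eM heM using fun i => (hpar i)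
    set mpt : Fin d → ℤ := fun i => φ u i + eM i with hmpt
    have hmem : castPt mpt ∈ segment ℝ (castPt (φ u)) (castPt (φ v)) := by
      refine ⟨1/2, 1/2, by norm_num, by norm_num, by norm_num, ?_⟩
      funext i
      simp only [castPt, Pi.add_apply, Pi.smul_apply, smul_eq_mul, hmpt]
      have h2 : ((φ v i - φ u i : ℤ) : ℝ) = ((2 * eM i : ℤ) : ℝ) := by rw [heM i]
      push_cast at h2 ⊢
      linarith
    have hm2 : mpt ∈ segGridPts (φ u) (φ v) := hmem
    rw [hprim u v hadj] at hm2
    apply hφne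
    funext i
    rcases hm2 with h | h
    · have h0 := congrFun h i
      simp only [hmpt] at h0
      have := heM i
      omega
    · have h0 := congrFun h i
      simp only [hmpt] at h0
      have := heM i
      omega
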